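/- An orientation K_{1,1,2}^σ of the complete tripartite graph K_{1,1,2} has skew-rank 2 if and only if its unique 4-vertex cycle is evenly-oriented; otherwise sr(K_{1,1,2}^σ) = 4. -/

import Mathlib

def IsSkewAdjacency {V : Type} [Fintype V] [DecidableEq V] (S : Matrix V V ℝ) : Prop :=
  S.transpose = -S ∧ ∀ i j : V, S i j = 0 ∨ S i j = 1 ∨ S i j = -1

def IsSkewAdjacencyOf {V : Type} [Fintype V] [DecidableEq V]
    (S : Matrix V V ℝ) (G : SimpleGraph V) : Prop :=
  IsSkewAdjacency S ∧ ∀ i j : V, S i j ≠ 0 ↔ G.Adj i j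

theorem skewRank_K112
    (S : Matrix (Fin 4) (Fin 4) ℝ) (hS : IsSkewAdjacency S)
    (h23 : S 2 3 = 0)
    (h01 : S 0 1 ≠ 0) (h02 : S 0 2 ≠ 0) (h03 : S 0 3 ≠ 0)
    (h12 : S 1 2 ≠ 0) (h13 : S 1 3 ≠ 0) :
    (S.rank = 2 ↔ 0 < S 0 2 * S 2 1 * S 1 3 * S 3 0) ∧
    (¬ 0 < S 0 2 * S 2 1 * S 1 3 * S 3 0 → S.rank = 4) := by
  obtain ⟨hT, hE⟩ := hS
  have hskew : ∀ i j, S j i = -S i j := by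
    intro i j
    have := congrFun (congrFun hT i) j
    simpa [Matrix.transpose_apply] using this
  have hdiag : ∀ i, S i i = 0 := by
    intro i; have := hskew i i; linarith
  set a := S 0 1 with ha
  set b := S 0 2 with hb
  set c := S 0 3 with hc
  set d := S 1 2 with hd
  set e := S 1 3 with he
  have hSeq : S = !![0,a,b,c; -a,0,d,e; -b,-d,0,0; -c,-e,0,0] := by
    ext i j
    fin_cases i <;> fin_cases j <;>
      simp [Matrix.vecHead, Matrix.vecTail, ← ha, ← hb, ← hc, ← hd, ← he] <;>
      first
        | exact hdiag _
        | exact hskew _ _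
        | exact h23
        | (rw [hskew 2 3, h23]; ring)
        | rfl
  have hpm : ∀ i j, S i j ≠ 0 → S i j = 1 ∨ S i j = -1 := by
    intro i j h; rcases hE i j with h0 | h1 | h2 <;> tauto
  have hprod : S 0 2 * S 2 1 * S 1 3 * S 3 0 = b * d * e * c := by
    rw [hskew 1 2, hskew 0 3, ← hb, ← hc, ← hd, ← he]; ring_nf
  have key_even : (0 < S 0 2 * S 2 1 * S 1 3 * S 3 0) → b * e = c * d := by
    rw [hprod]
    rcases hpm 0 2 h02 with hb1 | hb1 <;> rcases hpm 0 3 h03 with hc1 | hc1 <;>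
      rcases hpm 1 2 h12 with hd1 | hd1 <;> rcases hpm 1 3 h13 with he1 | he1 <;>
      rw [← hb, ← hc, ← hd, ← he] at * <;> rw [hb1, hc1, hd1, he1] <;> norm_num
  have key_odd : ¬ (0 < S 0 2 * S 2 1 * S 1 3 * S 3 0) → b * e ≠ c * d := by
    rw [hprod]
    rcases hpm 0 2 h02 with hb1 | hb1 <;> rcases hpm 0 3 h03 with hc1 | hc1 <;>
      rcases hpm 1 2 h12 with hd1 | hd1 <;> rcases hpm 1 3 h13 with he1 | he1 <;>
      rw [← hb, ← hc, ← hd, ← he] at * <;> rw [hb1, hc1, hd1, he1] <;> norm_num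
  have hdet : S.det = (b * e - c * d) ^ 2 := by
    rw [hSeq]
    simp [Matrix.det_succ_row_zero, Fin.sum_univ_succ, Matrix.det_fin_three,
      Matrix.submatrix_apply, Fin.succAbove,
      show (Fin.castSucc 2 : Fin 4) = 2 from rfl]
    ring
  have rank4 : b * e ≠ c * d → S.rank = 4 := by
    intro hne
    have hdet0 : S.det ≠ 0 := by
      rw [hdet]; exact pow_ne_zero 2 (sub_ne_zero.2 hne)
    have : IsUnit S := (Matrix.isUnit_iff_isUnit_det S).2 (isUnit_iff_ne_zero.2 hdet0)
    simpa using Matrix.rank_of_isUnit S this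
  have rank2 : b * e = c * d → S.rank = 2 := by
    intro heq
    have hle : S.rank ≤ 2 := by
      have hfac : S = (Matrix.of ![![1,0],![d/b, a/b],![0,1],![0,c/b]]) *
          (Matrix.of ![![(0:ℝ),a,b,c],![-b,-d,0,0]]) := by
        rw [hSeq]
        ext i j
        fin_cases i <;> fin_cases j <;>
          simp [Matrix.mul_apply, Fin.sum_univ_two, Matrix.vecHead, Matrix.vecTail]
        all_goals try field_simp
        all_goals first
          | ring1
          | linear_combination heq
          | linear_combination -heq
          | linear_combination a * heq
          | linear_combination -(a * heq)
      calc S.rank ≤ (Matrix.of ![![(0:ℝ),a,b,c],![-b,-d,0,0]]).rank := by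
              rw [hfac]; exact Matrix.rank_mul_le_right _ _
        _ ≤ 2 := by
              simpa using Matrix.rank_le_card_height
                (Matrix.of ![![(0:ℝ),a,b,c],![-b,-d,0,0]])
    have hge : 2 ≤ S.rank := by
      set P := (Matrix.of ![![(1:ℝ),0,0,0],![0,0,1,0]] : Matrix (Fin 2) (Fin 4) ℝ) with hP
      set B := (Matrix.of ![![(1:ℝ),0],![0,0],![0,1],![0,0]] : Matrix (Fin 4) (Fin 2) ℝ) with hB
      have h3 : P * S * B = Matrix.of ![![(0:ℝ), b],![-b, 0]] := by
        rw [hSeq]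
        ext i j
        fin_cases i <;> fin_cases j <;>
          simp [hP, hB, Matrix.mul_apply, Fin.sum_univ_four, Matrix.vecHead, Matrix.vecTail]
      have h2 : (P * S * B).rank ≤ S.rank :=
        (Matrix.rank_mul_le_left (P * S) B).trans (Matrix.rank_mul_le_right P S)
      have h4 : (Matrix.of ![![(0:ℝ), b],![-b, 0]]).rank = 2 := by
        have hdu : IsUnit (Matrix.of ![![(0:ℝ), b],![-b, 0]]).det := by
          rw [Matrix.det_fin_two]
          refine isUnit_iff_ne_zero.2 ?_
          simp only [Matrix.of_apply, Matrix.cons_val', Matrix.cons_val_zero, Matrix.cons_val_one,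
            Matrix.head_cons, Matrix.empty_val', Matrix.cons_val_fin_one, Matrix.head_fin_const]
          intro h; exact h02 (by nlinarith)
        have := Matrix.rank_of_isUnit _ ((Matrix.isUnit_iff_isUnit_det _).2 hdu)
        simpa using this
      rw [h3, h4] at h2
      exact h2
    omega
  constructor
  · constructor
    · intro hr2
      by_contra hneg
      have := rank4 (key_odd hneg)
      omega
    · intro hpos; exact rank2 (key_even hpos)
  · intro hneg; exact rank4 (key_odd hneg)
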